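/- Let V be a real inner product space with orthogonal complex structure J, L ⊆ V a J-invariant subspace, N an inner product space, φ: V × V → N symmetric bilinear with φ(JZ₁, JZ₂) = -φ(Z₁, Z₂) for Z₁, Z₂ ∈ L, δ ∈ N a unit vector with φ(X,Y) ⊥ δ for all X,Y, and A_δ = I on L (⟨A_δX, Z⟩ = ⟨X,Z⟩ for X ∈ V, Z ∈ L). If additionally dim N = 2 (so φ takes values in the 1-dimensional complement of δ) and ⟨φ(X,Z), φ(X,JZ)⟩ = 0 for all X ∈ V, Z ∈ L, then φ(X,Z) = 0 for all X ∈ V, Z ∈ L; consequently α(X,Z) = ⟨X,Z⟩δ for all X ∈ V, Z ∈ L. -/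

import Mathlib

open scoped RealInnerProductSpace

/-- In a 1-dimensional real inner product space (as a submodule), two orthogonal
vectors of equal norm are both zero. -/
lemma aux_dim1_orth {N : Type*} [NormedAddCommGroup N] [InnerProductSpace ℝ N] [FiniteDimensional ℝ N]
    (R : Submodule ℝ N) (hR : Module.finrank ℝ R = 1)
    (u v : R) (horth : ⟪(u : N), (v : N)⟫ = 0) (hnorm : ‖(u : N)‖ = ‖(v : N)‖) :
    (u : N) = 0 := by
  by_contra hu
  have hu' : u ≠ 0 := fun h => hu (by simp [h])
  have hspan : (Submodule.span ℝ {u} : Submodule ℝ R) = ⊤ := by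
    apply Submodule.eq_top_of_finrank_eq
    rw [finrank_span_singleton hu', hR]
  have hv : v ∈ Submodule.span ℝ ({u} : Set R) := hspan ▸ Submodule.mem_top
  obtain ⟨c, hc⟩ := Submodule.mem_span_singleton.mp hv
  have hcu : (v : N) = c • (u : N) := by rw [← hc]; simp
  rw [hcu, real_inner_smul_right] at horth
  have hun : ‖(u : N)‖ ≠ 0 := by
    simpa using fun h => hu h
  have hc0 : c = 0 := by
    rcases mul_eq_zero.mp horth with h | h
    · exact h
    · exact absurd ((@inner_self_eq_zero ℝ).mp h) hu
  rw [hcu, hc0, zero_smul, norm_zero] at hnorm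
  exact hun hnorm

/-- the dimension-count step in the proof of Theorem 1 (codimension 2):
`φ(X,Z) = 0` and hence `α(X,Z) = ⟨X,Z⟩ δ` for all `X ∈ V`, `Z ∈ L`. -/
theorem stmt_18
    (V N : Type*) [NormedAddCommGroup V] [InnerProductSpace ℝ V] [FiniteDimensional ℝ V]
    [NormedAddCommGroup N] [InnerProductSpace ℝ N] [FiniteDimensional ℝ N]
    (hN : Module.finrank ℝ N = 2)
    (J : V →ₗ[ℝ] V) (hJ2 : ∀ X : V, J (J X) = -X)
    (hJorth : ∀ X Y : V, ⟪J X, J Y⟫ = ⟪X, Y⟫)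
    (L : Submodule ℝ V) (hLJ : ∀ Z ∈ L, J Z ∈ L)
    (α : V →ₗ[ℝ] V →ₗ[ℝ] N) (hαsymm : ∀ X Y : V, α X Y = α Y X)
    (δ : N) (hδ : ‖δ‖ = 1)
    (φ : V → V → N) (hφ : ∀ X Y : V, φ X Y = α X Y - ⟪α X Y, δ⟫ • δ)
    (hAδ : ∀ X : V, ∀ Z ∈ L, ⟪α X Z, δ⟫ = ⟪X, Z⟫)
    (hanti : ∀ Z₁ ∈ L, ∀ Z₂ ∈ L, φ (J Z₁) (J Z₂) = -φ Z₁ Z₂)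
    (hflat : ∀ X₁ X₂ : V, ∀ Z₁ ∈ L, ∀ Z₂ ∈ L,
      ⟪φ X₁ Z₁, φ X₂ Z₂⟫ = ⟪φ X₁ (J Z₁), φ X₂ (J Z₂)⟫)
    (horth : ∀ X : V, ∀ Z ∈ L, ⟪φ X Z, φ X (J Z)⟫ = 0) :
    ∀ X : V, ∀ Z ∈ L, φ X Z = 0 ∧ α X Z = ⟪X, Z⟫ • δ := by
  have hδ0 : δ ≠ 0 := fun h => by simp [h] at hδ
  -- the orthogonal complement of δ has dimension 1
  haveI : Fact (Module.finrank ℝ N = 1 + 1) := ⟨by omega⟩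
  have hR : Module.finrank ℝ ((ℝ ∙ δ)ᗮ : Submodule ℝ N) = 1 :=
    Submodule.finrank_orthogonal_span_singleton hδ0
  -- φ takes values in the orthogonal complement of δ
  have hmem : ∀ X Y : V, φ X Y ∈ (ℝ ∙ δ)ᗮ := by
    intro X Y
    rw [Submodule.mem_orthogonal_singleton_iff_inner_right, hφ, inner_sub_right,
      real_inner_smul_right]
    have h1 : ⟪δ, δ⟫ = 1 := by rw [real_inner_self_eq_norm_sq, hδ]; ring
    rw [h1, real_inner_comm]; ring
  intro X Z hZ
  have hJZ : J Z ∈ L := hLJ Z hZ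
  have hnormsq : ⟪φ X Z, φ X Z⟫ = ⟪φ X (J Z), φ X (J Z)⟫ := hflat X X Z hZ Z hZ
  have hnorm : ‖φ X Z‖ = ‖φ X (J Z)‖ := by
    have := congrArg Real.sqrt hnormsq
    rwa [real_inner_self_eq_norm_sq, real_inner_self_eq_norm_sq,
      Real.sqrt_sq (norm_nonneg _), Real.sqrt_sq (norm_nonneg _)] at this
  have hzero : φ X Z = 0 :=
    aux_dim1_orth _ hR ⟨φ X Z, hmem X Z⟩ ⟨φ X (J Z), hmem X (J Z)⟩ (horth X Z hZ) hnorm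
  refine ⟨hzero, ?_⟩
  have := hφ X Z
  rw [hzero, hAδ X Z hZ] at this
  linear_combination (norm := module) -this
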